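/- Let s ≥ 0 and 0 ≤ β' < β ≤ 1/2. Let B be the infinite matrix indexed by positive integers with entries b_i^j = i^{s+β'} · j^{−s} · (i∧j)^{−β} · (1+|i−j|)^{−1} · w(i,j)^{−s}. Then B defines a bounded linear operator on ℓ²(ℕ⁺) whose operator norm satisfies ‖B‖_{ℓ²→ℓ²} ≤ 2^{s+4}/(β−β'). -/

import Mathlib

/-- The weight `w(i,j) = (√(i∧j) + |i−j|)/√(i∧j)` for positive integers `i, j`. -/
noncomputable def w (i j : ℕ+) : ℝ :=
  (Real.sqrt (min (i : ℝ) (j : ℝ)) + |(i : ℝ) - (j : ℝ)|) / Real.sqrt (min (i : ℝ) (j : ℝ))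

/-- The matrix entries `b_i^j = i^{s+β'} j^{−s} (i∧j)^{−β} (1+|i−j|)^{−1} w(i,j)^{−s}`. -/
noncomputable def bEnt (s β β' : ℝ) (i j : ℕ+) : ℝ :=
  (i : ℝ) ^ (s + β') * (j : ℝ) ^ (-s) * ((min i j : ℕ+) : ℝ) ^ (-β) *
    (1 + |(i : ℝ) - (j : ℝ)|)⁻¹ * w i j ^ (-s)


open Finset in
lemma rpow_neg_anti {x y a : ℝ} (hx : 0 < x) (hxy : x ≤ y) (ha : 0 ≤ a) :
    y ^ (-a) ≤ x ^ (-a) := by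
  rw [Real.rpow_neg (le_of_lt hx), Real.rpow_neg (by linarith)]
  exact inv_anti₀ (Real.rpow_pos_of_pos hx a) (Real.rpow_le_rpow hx.le hxy ha)

lemma rpow_neg_le_one {x a : ℝ} (hx : 1 ≤ x) (ha : 0 ≤ a) : x ^ (-a) ≤ 1 := by
  have := rpow_neg_anti one_pos hx ha
  simpa using this

lemma step1 {a : ℝ} (ha0 : 0 ≤ a) (ha1 : a < 1) {x : ℝ} (hx : 1 ≤ x) :
    (1 - a) * x ^ (-a) ≤ x ^ (1-a) - (x-1) ^ (1-a) := by
  have hx0 : (0:ℝ) < x := by linarith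
  have key : (x-1) ^ (1-a) ≤ x ^ (1-a) - (1-a) * x ^ (-a) := by
    have h1 : ((x-1)/x) ^ (1-a) ≤ 1 + (1-a) * ((x-1)/x - 1) := by
      have := rpow_one_add_le_one_add_mul_self (s := (x-1)/x - 1) (p := 1-a)
        (by have h0 : 0 ≤ (x-1)/x := div_nonneg (by linarith) hx0.le; linarith) (by linarith) (by linarith)
      simpa using this
    have h2 : (x-1) ^ (1-a) = ((x-1)/x) ^ (1-a) * x ^ (1-a) := by
      rw [← Real.mul_rpow (div_nonneg (by linarith) hx0.le) hx0.le, div_mul_cancel₀]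
      exact ne_of_gt hx0
    have h3 : (x-1)/x - 1 = -x⁻¹ := by field_simp; ring
    have h4 : x ^ (1-a) * x⁻¹ = x ^ (-a) := by
      rw [← Real.rpow_neg_one x, ← Real.rpow_add hx0]; ring_nf
    calc (x-1) ^ (1-a) = ((x-1)/x) ^ (1-a) * x ^ (1-a) := h2
      _ ≤ (1 + (1-a) * ((x-1)/x - 1)) * x ^ (1-a) := by
          apply mul_le_mul_of_nonneg_right h1 (Real.rpow_nonneg hx0.le _)
      _ = x ^ (1-a) - (1-a) * (x ^ (1-a) * x⁻¹) := by rw [h3]; ring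
      _ = x ^ (1-a) - (1-a) * x ^ (-a) := by rw [h4]
  linarith

lemma sum_range_rpow_le {a : ℝ} (ha0 : 0 ≤ a) (ha1 : a < 1) (N : ℕ) :
    ∑ n ∈ Finset.range N, ((n:ℝ)+1) ^ (-a) ≤ (N:ℝ) ^ (1-a) / (1-a) := by
  induction N with
  | zero => simp [Real.zero_rpow (by linarith : (1:ℝ)-a ≠ 0)]
  | succ N ih =>
    rw [Finset.sum_range_succ]
    have hx : (1:ℝ) ≤ (N:ℝ)+1 := by have := Nat.cast_nonneg (α := ℝ) N; linarith
    have h := step1 ha0 ha1 hx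
    have h1a : (0:ℝ) < 1 - a := by linarith
    have : ((N:ℝ)+1) ^ (-a) ≤ (((N:ℝ)+1) ^ (1-a) - (N:ℝ) ^ (1-a)) / (1-a) := by
      rw [le_div_iff₀ h1a]
      have : ((N:ℝ)+1) - 1 = (N:ℝ) := by ring
      calc ((N:ℝ)+1) ^ (-a) * (1-a) = (1-a) * ((N:ℝ)+1) ^ (-a) := by ring
        _ ≤ ((N:ℝ)+1) ^ (1-a) - (((N:ℝ)+1)-1) ^ (1-a) := h
        _ = ((N:ℝ)+1) ^ (1-a) - (N:ℝ) ^ (1-a) := by rw [this]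
    have hsub := sub_div (((N:ℝ)+1)^(1-a)) ((N:ℝ)^(1-a)) (1-a)
    push_cast
    linarith


lemma step2 {a : ℝ} (ha0 : 0 < a) (ha1 : a ≤ 1) {x : ℝ} (hx : 2 ≤ x) :
    a * x ^ (-(1+a)) ≤ (x-1) ^ (-a) - x ^ (-a) := by
  have hx0 : (0:ℝ) < x := by linarith
  have hx1 : (0:ℝ) < x - 1 := by linarith
  have hax : a / x ≤ 1/2 := by
    rw [div_le_div_iff₀ hx0 two_pos]; nlinarith
  have h1 : ((x-1)/x) ^ a ≤ 1 - a/x := by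
    have hb : (x-1)/x = 1 + ((x-1)/x - 1) := by ring
    have := rpow_one_add_le_one_add_mul_self (s := (x-1)/x - 1) (p := a)
      (by have h0 : 0 ≤ (x-1)/x := div_nonneg hx1.le hx0.le; linarith) ha0.le ha1
    rw [← hb] at this
    have h3 : (x-1)/x - 1 = -(x⁻¹) := by field_simp; ring
    rw [h3] at this
    calc ((x-1)/x) ^ a ≤ 1 + a * -(x⁻¹) := this
      _ = 1 - a/x := by rw [div_eq_mul_inv]; ring
  have h2 : (x-1) ^ a ≤ x ^ a * (1 - a/x) := by
    calc (x-1) ^ a = ((x-1)/x) ^ a * x ^ a := by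
          rw [← Real.mul_rpow (div_nonneg hx1.le hx0.le) hx0.le, div_mul_cancel₀ _ (ne_of_gt hx0)]
      _ ≤ (1 - a/x) * x ^ a := mul_le_mul_of_nonneg_right h1 (Real.rpow_nonneg hx0.le a)
      _ = x ^ a * (1 - a/x) := by ring
  have hpos : (0:ℝ) < 1 - a/x := by linarith
  have hxa : (0:ℝ) < x ^ a := Real.rpow_pos_of_pos hx0 a
  have hx1a : (0:ℝ) < (x-1) ^ a := Real.rpow_pos_of_pos hx1 a
  have h4 : (x ^ a)⁻¹ * (1 + a/x) ≤ ((x-1) ^ a)⁻¹ := by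
    have hinv : (x ^ a * (1 - a/x))⁻¹ ≤ ((x-1) ^ a)⁻¹ :=
      inv_anti₀ hx1a h2
    refine le_trans ?_ hinv
    rw [mul_inv]
    have hstep : (1 + a/x) ≤ (1 - a/x)⁻¹ := by
      rw [inv_eq_one_div, le_div_iff₀ hpos]; nlinarith [sq_nonneg (a/x)]
    exact mul_le_mul_of_nonneg_left hstep (by positivity)
  have h5 : x ^ (-a) * (a/x) = a * x ^ (-(1+a)) := by
    rw [show -(1+a) = -a + (-1) by ring, Real.rpow_add hx0, Real.rpow_neg_one]; ring
  have h4' : x ^ (-a) * (1 + a/x) ≤ (x-1) ^ (-a) := by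
    rw [Real.rpow_neg hx0.le, Real.rpow_neg hx1.le]; exact h4
  have hexp : x ^ (-a) * (1 + a/x) = x ^ (-a) + x ^ (-a) * (a/x) := by ring
  have hxa' : x ^ (-a) = (x ^ a)⁻¹ := Real.rpow_neg hx0.le a
  linarith

lemma summable_tail {a : ℝ} (ha0 : 0 < a) (ha1 : a ≤ 1) :
    Summable (fun n : ℕ => ((n:ℝ)+2) ^ (-(1+a))) ∧
    (∑' n : ℕ, ((n:ℝ)+2) ^ (-(1+a))) ≤ 1/a := by
  set f : ℕ → ℝ := fun m => ((m:ℝ)+1) ^ (-a) with hf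
  have hnn : ∀ n : ℕ, 0 ≤ ((n:ℝ)+2) ^ (-(1+a)) := fun n => Real.rpow_nonneg (by positivity) _
  have hpart : ∀ N : ℕ, ∑ n ∈ Finset.range N, ((n:ℝ)+2) ^ (-(1+a)) ≤ 1/a := by
    intro N
    have key : ∀ n : ℕ, ((n:ℝ)+2) ^ (-(1+a)) ≤ (f n - f (n+1)) / a := by
      intro n
      rw [le_div_iff₀ ha0, hf]
      have h := step2 ha0 ha1 (x := (n:ℝ)+2) (by have := Nat.cast_nonneg (α := ℝ) n; linarith)
      have e1 : ((n:ℝ)+2) - 1 = (n:ℝ)+1 := by ring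
      rw [e1] at h
      have e2 : ((n+1:ℕ):ℝ)+1 = (n:ℝ)+2 := by push_cast; ring
      simp only [e2]
      linarith
    calc ∑ n ∈ Finset.range N, ((n:ℝ)+2) ^ (-(1+a))
        ≤ ∑ n ∈ Finset.range N, ((f n - f (n+1)) / a) :=
          Finset.sum_le_sum (fun n _ => key n)
      _ = (∑ n ∈ Finset.range N, (f n - f (n+1))) / a := by rw [Finset.sum_div]
      _ = (f 0 - f N) / a := by rw [Finset.sum_range_sub' f]
      _ ≤ 1/a := by
          have h1 : f 0 = 1 := by simp [hf]
          have h2 : 0 ≤ f N := Real.rpow_nonneg (by positivity) _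
          rw [h1]; gcongr; linarith
  have hs : Summable (fun n : ℕ => ((n:ℝ)+2) ^ (-(1+a))) :=
    summable_of_sum_range_le hnn hpart
  exact ⟨hs, Real.tsum_le_of_sum_range_le hnn hpart⟩


lemma core_fin {a a' : ℝ} (h0 : 0 ≤ a') (h3 : a' < 1) (h1 : a' < a) (h2 : a ≤ 1)
    (i : ℕ) (hi : 1 ≤ i) :
    ∑ n ∈ Finset.range i, ((n:ℝ)+1) ^ (-a) * ((i:ℝ)-(n:ℝ))⁻¹ ≤
      (2/(a-a') + 2/(1-a')) * (i:ℝ) ^ (-a') := by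
  have hi0 : (0:ℝ) < i := by exact_mod_cast hi
  have hi1 : (1:ℝ) ≤ i := by exact_mod_cast hi
  set c : ℝ := 1 - (a - a') with hc
  have hc0 : 0 ≤ c := by simp [hc]; linarith
  have hc1 : c < 1 := by simp [hc]; linarith
  have key : ∀ n ∈ Finset.range i, ((n:ℝ)+1) ^ (-a) * ((i:ℝ)-(n:ℝ))⁻¹ ≤
      2 * (i:ℝ) ^ (-a) * ((i:ℝ)-(n:ℝ)) ^ (-c) + 2 * (i:ℝ)⁻¹ * ((n:ℝ)+1) ^ (-a') := by
    intro n hn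
    rw [Finset.mem_range] at hn
    have hn1 : (0:ℝ) < (n:ℝ)+1 := by positivity
    have hin : (1:ℝ) ≤ (i:ℝ)-(n:ℝ) := by
      have : (n:ℝ)+1 ≤ (i:ℝ) := by exact_mod_cast hn
      linarith
    have hin0 : (0:ℝ) < (i:ℝ)-(n:ℝ) := by linarith
    have hterm1 : (0:ℝ) ≤ ((n:ℝ)+1) ^ (-a) := Real.rpow_nonneg hn1.le _
    rcases le_or_gt (i:ℝ) (2*((n:ℝ)+1)) with hcase | hcase
    · -- n+1 ≥ i/2
      have e1 : ((n:ℝ)+1) ^ (-a) ≤ 2 * (i:ℝ) ^ (-a) := by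
        have step : ((n:ℝ)+1) ^ (-a) ≤ ((i:ℝ)/2) ^ (-a) :=
          rpow_neg_anti (by linarith) (by linarith) (by linarith)
        have e2 : ((i:ℝ)/2) ^ (-a) = (i:ℝ) ^ (-a) * 2 ^ a := by
          rw [div_eq_mul_inv, Real.mul_rpow hi0.le (by norm_num),
            Real.inv_rpow (by norm_num)]
          congr 1
          rw [Real.rpow_neg (by norm_num), inv_inv]
        have e3 : (2:ℝ) ^ a ≤ 2 := by
          calc (2:ℝ) ^ a ≤ 2 ^ (1:ℝ) :=
            Real.rpow_le_rpow_of_exponent_le one_le_two h2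
          _ = 2 := Real.rpow_one 2
        calc ((n:ℝ)+1) ^ (-a) ≤ (i:ℝ) ^ (-a) * 2 ^ a := step.trans_eq e2
          _ ≤ (i:ℝ) ^ (-a) * 2 := by
              exact mul_le_mul_of_nonneg_left e3 (Real.rpow_nonneg hi0.le _)
          _ = 2 * (i:ℝ) ^ (-a) := by ring
      have e4 : ((i:ℝ)-(n:ℝ))⁻¹ ≤ ((i:ℝ)-(n:ℝ)) ^ (-c) := by
        rw [← Real.rpow_neg_one]
        exact Real.rpow_le_rpow_of_exponent_le hin (by linarith)
      have := mul_le_mul e1 e4 (by positivity) (by positivity)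
      have hpos : (0:ℝ) ≤ 2 * (i:ℝ)⁻¹ * ((n:ℝ)+1) ^ (-a') := by positivity
      linarith
    · -- i - n > i/2
      have e1 : ((i:ℝ)-(n:ℝ))⁻¹ ≤ 2 * (i:ℝ)⁻¹ := by
        have h2' : (i:ℝ)/2 ≤ (i:ℝ)-(n:ℝ) := by linarith
        have := inv_anti₀ (by linarith : (0:ℝ) < (i:ℝ)/2) h2'
        calc ((i:ℝ)-(n:ℝ))⁻¹ ≤ ((i:ℝ)/2)⁻¹ := this
          _ = 2 * (i:ℝ)⁻¹ := by field_simp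
      have e2 : ((n:ℝ)+1) ^ (-a) ≤ ((n:ℝ)+1) ^ (-a') := by
        rcases eq_or_lt_of_le (by linarith : (1:ℝ) ≤ (n:ℝ)+1) with h | h
        · rw [← h]; simp
        · exact Real.rpow_le_rpow_of_exponent_le (by linarith) (by linarith)
      have := mul_le_mul e2 e1 (by positivity) (Real.rpow_nonneg (by positivity) _)
      have hpos : (0:ℝ) ≤ 2 * (i:ℝ) ^ (-a) * ((i:ℝ)-(n:ℝ)) ^ (-c) := by positivity
      nlinarith
  have hsum := Finset.sum_le_sum key
  rw [Finset.sum_add_distrib, ← Finset.mul_sum, ← Finset.mul_sum] at hsum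
  have refl1 : ∑ n ∈ Finset.range i, ((i:ℝ)-(n:ℝ)) ^ (-c) =
      ∑ n ∈ Finset.range i, ((n:ℝ)+1) ^ (-c) := by
    rw [← Finset.sum_range_reflect (fun n => ((n:ℝ)+1) ^ (-c)) i]
    apply Finset.sum_congr rfl
    intro n hn
    rw [Finset.mem_range] at hn
    congr 1
    have h1 : n + 1 ≤ i := hn
    have : (i - 1 - n : ℕ) = i - (n+1) := by omega
    rw [this, Nat.cast_sub h1]
    push_cast
    ring
  have b1 : ∑ n ∈ Finset.range i, ((n:ℝ)+1) ^ (-c) ≤ (i:ℝ) ^ (a-a') / (a-a') := by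
    have := sum_range_rpow_le hc0 hc1 i
    rw [show 1 - c = a - a' by rw [hc]; ring] at this
    exact this
  have b2 : ∑ n ∈ Finset.range i, ((n:ℝ)+1) ^ (-a') ≤ (i:ℝ) ^ (1-a') / (1-a') :=
    sum_range_rpow_le h0 h3 i
  have key1 : (i:ℝ) ^ (-a) * (i:ℝ) ^ (a-a') = (i:ℝ) ^ (-a') := by
    rw [← Real.rpow_add hi0]; congr 1; ring
  have key2 : (i:ℝ)⁻¹ * (i:ℝ) ^ (1-a') = (i:ℝ) ^ (-a') := by
    rw [← Real.rpow_neg_one (i:ℝ), ← Real.rpow_add hi0]; congr 1; ring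
  have comb1 : 2 * (i:ℝ) ^ (-a) * ((i:ℝ) ^ (a-a') / (a-a')) = 2/(a-a') * (i:ℝ) ^ (-a') := by
    rw [← key1]; ring
  have comb2 : 2 * (i:ℝ)⁻¹ * ((i:ℝ) ^ (1-a') / (1-a')) = 2/(1-a') * (i:ℝ) ^ (-a') := by
    rw [← key2]; ring
  have m1 : 2 * (i:ℝ) ^ (-a) * (∑ n ∈ Finset.range i, ((i:ℝ)-(n:ℝ)) ^ (-c)) ≤
      2/(a-a') * (i:ℝ) ^ (-a') := by
    rw [refl1, ← comb1]
    exact mul_le_mul_of_nonneg_left b1 (by positivity)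
  have m2 : 2 * (i:ℝ)⁻¹ * (∑ n ∈ Finset.range i, ((n:ℝ)+1) ^ (-a')) ≤
      2/(1-a') * (i:ℝ) ^ (-a') := by
    rw [← comb2]
    exact mul_le_mul_of_nonneg_left b2 (by positivity)
  calc ∑ n ∈ Finset.range i, ((n:ℝ)+1) ^ (-a) * ((i:ℝ)-(n:ℝ))⁻¹ ≤ _ := hsum
    _ ≤ 2/(a-a') * (i:ℝ) ^ (-a') + 2/(1-a') * (i:ℝ) ^ (-a') := add_le_add m1 m2
    _ = (2/(a-a') + 2/(1-a')) * (i:ℝ) ^ (-a') := by ring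


lemma pnat_one_le_real (x : ℕ+) : (1:ℝ) ≤ (x:ℝ) := by exact_mod_cast x.one_le

lemma S_bound {b c a' m' : ℝ} (hb : 0 ≤ b) (hc : 0 ≤ c) (h1 : 0 ≤ a') (h2 : a' < 1)
    (h3 : a' < b + c) (h4 : b + c ≤ 1) (hm0 : 0 < m') (hmc : m' ≤ c) (hm1 : m' ≤ 1)
    (hma : m' ≤ b + c - a') (x : ℕ+) :
    Summable (fun y : ℕ+ =>
      ((min x y : ℕ+):ℝ) ^ (-b) * ((y:ℝ)) ^ (-c) * (1 + |(x:ℝ)-(y:ℝ)|)⁻¹) ∧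
    (∑' y : ℕ+, ((min x y : ℕ+):ℝ) ^ (-b) * ((y:ℝ)) ^ (-c) * (1 + |(x:ℝ)-(y:ℝ)|)⁻¹) ≤
      (2/(b+c-a') + 2/(1-a') + 1/m') * (x:ℝ) ^ (-a') := by
  have hx1 : (1:ℝ) ≤ (x:ℝ) := pnat_one_le_real x
  have hx0 : (0:ℝ) < (x:ℝ) := by linarith
  set f : ℕ+ → ℝ := fun y =>
    ((min x y : ℕ+):ℝ) ^ (-b) * ((y:ℝ)) ^ (-c) * (1 + |(x:ℝ)-(y:ℝ)|)⁻¹ with hfdef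
  set F : ℕ → ℝ := fun n => f (Nat.succPNat n) with hFdef
  have hcoe : ∀ n : ℕ, ((Nat.succPNat n : ℕ+):ℝ) = (n:ℝ)+1 := by
    intro n
    have h : ((Nat.succPNat n : ℕ+):ℕ) = n + 1 := Nat.succPNat_coe n
    rw [show ((Nat.succPNat n : ℕ+):ℝ) = (((Nat.succPNat n : ℕ+):ℕ):ℝ) from rfl, h]
    push_cast; ring
  have hFnn : ∀ n, 0 ≤ F n := by
    intro n
    have h0 : (0:ℝ) ≤ 1 + |(x:ℝ)-((Nat.succPNat n:ℕ+):ℝ)| := by positivity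
    exact mul_nonneg (mul_nonneg (Real.rpow_nonneg (by positivity) _)
      (Real.rpow_nonneg (by positivity) _)) (inv_nonneg.2 h0)
  -- tail bound
  have htail : ∀ n : ℕ, F (n + (x:ℕ)) ≤
      ((x:ℝ) ^ (-(b + c - m'))) * ((n:ℝ)+2) ^ (-(1+m')) := by
    intro n
    have hy : ((Nat.succPNat (n+(x:ℕ)) : ℕ+):ℝ) = (n:ℝ)+(x:ℝ)+1 := by
      rw [hcoe]; push_cast; ring
    have hyx : x ≤ Nat.succPNat (n+(x:ℕ)) := by
      rw [← PNat.coe_le_coe, Nat.succPNat_coe]; omega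
    have hmin : (min x (Nat.succPNat (n+(x:ℕ))) : ℕ+) = x := min_eq_left hyx
    have habs : (1:ℝ) + |(x:ℝ) - ((Nat.succPNat (n+(x:ℕ)) : ℕ+):ℝ)| = (n:ℝ)+2 := by
      rw [hy, show (x:ℝ) - ((n:ℝ)+(x:ℝ)+1) = -((n:ℝ)+1) by ring, abs_neg,
        abs_of_nonneg (by positivity)]
      ring
    have e1 : F (n+(x:ℕ)) = (x:ℝ) ^ (-b) * ((n:ℝ)+(x:ℝ)+1) ^ (-c) * ((n:ℝ)+2)⁻¹ := by
      rw [hFdef, hfdef]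
      simp only
      rw [hmin, habs, hy]
    rw [e1]
    have hn2 : (0:ℝ) < (n:ℝ)+2 := by positivity
    have hni : (0:ℝ) < (n:ℝ)+(x:ℝ)+1 := by positivity
    have s1 : ((n:ℝ)+(x:ℝ)+1) ^ (-c) ≤ (x:ℝ) ^ (-(c-m')) * ((n:ℝ)+2) ^ (-m') := by
      have d1 : ((n:ℝ)+(x:ℝ)+1) ^ (-c) =
          ((n:ℝ)+(x:ℝ)+1) ^ (-(c-m')) * ((n:ℝ)+(x:ℝ)+1) ^ (-m') := by
        rw [← Real.rpow_add hni]; congr 1; ring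
      rw [d1]
      have i1 : ((n:ℝ)+(x:ℝ)+1) ^ (-(c-m')) ≤ (x:ℝ) ^ (-(c-m')) := by
        apply rpow_neg_anti hx0 ?_ (by linarith)
        have := Nat.cast_nonneg (α:=ℝ) n
        linarith
      have i2 : ((n:ℝ)+(x:ℝ)+1) ^ (-m') ≤ ((n:ℝ)+2) ^ (-m') := by
        apply rpow_neg_anti hn2 ?_ hm0.le
        linarith
      exact mul_le_mul i1 i2 (Real.rpow_nonneg hni.le _) (Real.rpow_nonneg hx0.le _)
    have s2 : ((n:ℝ)+2)⁻¹ * ((n:ℝ)+2) ^ (-m') = ((n:ℝ)+2) ^ (-(1+m')) := by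
      rw [← Real.rpow_neg_one ((n:ℝ)+2), ← Real.rpow_add hn2]; congr 1; ring
    have s3 : (x:ℝ) ^ (-b) * (x:ℝ) ^ (-(c-m')) = (x:ℝ) ^ (-(b+c-m')) := by
      rw [← Real.rpow_add hx0]; congr 1; ring
    calc (x:ℝ) ^ (-b) * ((n:ℝ)+(x:ℝ)+1) ^ (-c) * ((n:ℝ)+2)⁻¹
        ≤ (x:ℝ) ^ (-b) * ((x:ℝ) ^ (-(c-m')) * ((n:ℝ)+2) ^ (-m')) * ((n:ℝ)+2)⁻¹ := by
          apply mul_le_mul_of_nonneg_right ?_ (by positivity)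
          exact mul_le_mul_of_nonneg_left s1 (Real.rpow_nonneg hx0.le _)
      _ = ((x:ℝ) ^ (-b) * (x:ℝ) ^ (-(c-m'))) * (((n:ℝ)+2)⁻¹ * ((n:ℝ)+2) ^ (-m')) := by ring
      _ = (x:ℝ) ^ (-(b+c-m')) * ((n:ℝ)+2) ^ (-(1+m')) := by rw [s2, s3]
  have htail_summable : Summable (fun n : ℕ => F (n + (x:ℕ))) := by
    apply Summable.of_nonneg_of_le (fun n => hFnn _) htail
    exact ((summable_tail hm0 hm1).1.mul_left _)
  have hFsummable : Summable F := (summable_nat_add_iff (x:ℕ)).mp htail_summable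
  have hfsummable : Summable f := by
    rw [← Equiv.pnatEquivNat.symm.summable_iff]
    exact hFsummable
  have htsum_eq : ∑' y : ℕ+, f y = ∑' n : ℕ, F n :=
    (Equiv.pnatEquivNat.symm.tsum_eq f).symm
  refine ⟨hfsummable, ?_⟩
  have hsplit := (Summable.sum_add_tsum_nat_add (x:ℕ) hFsummable).symm
  have hfin : ∑ n ∈ Finset.range (x:ℕ), F n ≤ (2/(b+c-a') + 2/(1-a')) * (x:ℝ) ^ (-a') := by
    have hterm : ∀ n ∈ Finset.range (x:ℕ), F n = ((n:ℝ)+1) ^ (-(b+c)) * ((x:ℝ)-(n:ℝ))⁻¹ := by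
      intro n hn
      rw [Finset.mem_range] at hn
      have hyx : Nat.succPNat n ≤ x := by
        rw [← PNat.coe_le_coe, Nat.succPNat_coe]; omega
      have hmin : (min x (Nat.succPNat n) : ℕ+) = Nat.succPNat n := min_eq_right hyx
      have hn1 : (0:ℝ) < (n:ℝ)+1 := by positivity
      have hnc : ((n:ℝ)+1) ≤ (x:ℝ) := by exact_mod_cast hn
      have habs : (1:ℝ) + |(x:ℝ) - ((Nat.succPNat n : ℕ+):ℝ)| = (x:ℝ) - (n:ℝ) := by
        rw [hcoe, abs_of_nonneg (by linarith)]; ring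
      have hrw : ((n:ℝ)+1) ^ (-b) * ((n:ℝ)+1) ^ (-c) = ((n:ℝ)+1) ^ (-(b+c)) := by
        rw [← Real.rpow_add hn1]; congr 1; ring
      rw [hFdef, hfdef]
      simp only
      rw [hmin, habs, hcoe, hrw]
    rw [Finset.sum_congr rfl hterm]
    have hxx : (((x:ℕ):ℕ):ℝ) = (x:ℝ) := rfl
    have := core_fin h1 h2 h3 h4 (x:ℕ) x.one_le
    calc ∑ n ∈ Finset.range (x:ℕ), ((n:ℝ)+1) ^ (-(b+c)) * ((x:ℝ)-(n:ℝ))⁻¹ =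
        ∑ n ∈ Finset.range (x:ℕ), ((n:ℝ)+1) ^ (-(b+c)) * ((((x:ℕ)):ℝ)-(n:ℝ))⁻¹ := rfl
      _ ≤ (2/((b+c)-a') + 2/(1-a')) * (((x:ℕ)):ℝ) ^ (-a') := this
      _ = (2/(b+c-a') + 2/(1-a')) * (x:ℝ) ^ (-a') := rfl
  have htailsum : ∑' n : ℕ, F (n + (x:ℕ)) ≤ (1/m') * (x:ℝ) ^ (-a') := by
    have hle1 : ∑' n : ℕ, F (n + (x:ℕ)) ≤
        ∑' n : ℕ, ((x:ℝ) ^ (-(b + c - m'))) * ((n:ℝ)+2) ^ (-(1+m')) :=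
      Summable.tsum_le_tsum htail htail_summable ((summable_tail hm0 hm1).1.mul_left _)
    have hle2 : ∑' n : ℕ, ((x:ℝ) ^ (-(b + c - m'))) * ((n:ℝ)+2) ^ (-(1+m')) =
        ((x:ℝ) ^ (-(b + c - m'))) * ∑' n : ℕ, ((n:ℝ)+2) ^ (-(1+m')) := tsum_mul_left
    have hle3 : ((x:ℝ) ^ (-(b + c - m'))) * (∑' n : ℕ, ((n:ℝ)+2) ^ (-(1+m'))) ≤
        ((x:ℝ) ^ (-a')) * (1/m') := by
      apply mul_le_mul
      · exact Real.rpow_le_rpow_of_exponent_le hx1 (by linarith)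
      · exact (summable_tail hm0 hm1).2
      · exact tsum_nonneg (fun n => Real.rpow_nonneg (by positivity) _)
      · exact Real.rpow_nonneg hx0.le _
    calc ∑' n : ℕ, F (n + (x:ℕ)) ≤ _ := hle1
      _ = _ := hle2
      _ ≤ ((x:ℝ) ^ (-a')) * (1/m') := hle3
      _ = (1/m') * (x:ℝ) ^ (-a') := by ring
  show ∑' y : ℕ+, f y ≤ _
  rw [htsum_eq, hsplit]
  calc ∑ n ∈ Finset.range (x:ℕ), F n + ∑' n : ℕ, F (n + (x:ℕ))
      ≤ (2/(b+c-a') + 2/(1-a')) * (x:ℝ) ^ (-a') + (1/m') * (x:ℝ) ^ (-a') :=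
        add_le_add hfin htailsum
    _ = (2/(b+c-a') + 2/(1-a') + 1/m') * (x:ℝ) ^ (-a') := by ring


lemma pnat_min_cast (x y : ℕ+) : ((min x y : ℕ+) : ℝ) = min (x:ℝ) (y:ℝ) := by
  rcases le_total x y with h | h
  · rw [min_eq_left h, min_eq_left (by exact_mod_cast h : (x:ℝ) ≤ (y:ℝ))]
  · rw [min_eq_right h, min_eq_right (by exact_mod_cast h : (y:ℝ) ≤ (x:ℝ))]

noncomputable def Kker (β β' : ℝ) (i j : ℕ+) : ℝ :=
  (i:ℝ) ^ β' * ((min i j : ℕ+):ℝ) ^ (-β) * (1 + |(i:ℝ)-(j:ℝ)|)⁻¹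

lemma Kker_nonneg (β β' : ℝ) (i j : ℕ+) : 0 ≤ Kker β β' i j := by
  unfold Kker
  have h0 : (0:ℝ) ≤ 1 + |(i:ℝ)-(j:ℝ)| := by positivity
  exact mul_nonneg (mul_nonneg (Real.rpow_nonneg (by positivity) _)
    (Real.rpow_nonneg (by positivity) _)) (inv_nonneg.2 h0)

lemma w_pos (i j : ℕ+) : 0 < w i j := by
  unfold w
  have hmin : (1:ℝ) ≤ min (i:ℝ) (j:ℝ) := le_min (pnat_one_le_real i) (pnat_one_le_real j)
  have hs : 0 < Real.sqrt (min (i:ℝ) (j:ℝ)) := Real.sqrt_pos.2 (by linarith)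
  exact div_pos (by positivity) hs

lemma bEnt_nonneg (s β β' : ℝ) (i j : ℕ+) : 0 ≤ bEnt s β β' i j := by
  unfold bEnt
  have h0 : (0:ℝ) ≤ 1 + |(i:ℝ)-(j:ℝ)| := by positivity
  have := (w_pos i j).le
  exact mul_nonneg (mul_nonneg (mul_nonneg (mul_nonneg
    (Real.rpow_nonneg (by positivity) _) (Real.rpow_nonneg (by positivity) _))
    (Real.rpow_nonneg (by positivity) _)) (inv_nonneg.2 h0)) (Real.rpow_nonneg this _)

lemma bEnt_le_K {s : ℝ} (hs : 0 ≤ s) (β β' : ℝ) (i j : ℕ+) :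
    bEnt s β β' i j ≤ Kker β β' i j := by
  have hi1 : (1:ℝ) ≤ (i:ℝ) := pnat_one_le_real i
  have hj1 : (1:ℝ) ≤ (j:ℝ) := pnat_one_le_real j
  have hi0 : (0:ℝ) < (i:ℝ) := by linarith
  have hj0 : (0:ℝ) < (j:ℝ) := by linarith
  have hw : 0 < w i j := w_pos i j
  have hA : (i:ℝ) ^ s * (j:ℝ) ^ (-s) * (w i j) ^ (-s) ≤ 1 := by
    have hu1 : (i:ℝ) ≤ (j:ℝ) * w i j := by
      unfold w
      set m := min (i:ℝ) (j:ℝ) with hm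
      have hm1 : (1:ℝ) ≤ m := le_min hi1 hj1
      have hsq : 0 < Real.sqrt m := Real.sqrt_pos.2 (by linarith)
      rw [mul_div_assoc']
      rw [le_div_iff₀ hsq]
      rcases le_total (i:ℝ) (j:ℝ) with h | h
      · have : m = (i:ℝ) := min_eq_left h
        have habs : (0:ℝ) ≤ |(i:ℝ)-(j:ℝ)| := abs_nonneg _
        nlinarith [hsq.le]
      · have hmj : m = (j:ℝ) := min_eq_right h
        have habs : |(i:ℝ)-(j:ℝ)| = (i:ℝ)-(j:ℝ) := abs_of_nonneg (by linarith)
        have hsle : Real.sqrt (j:ℝ) ≤ (j:ℝ) := by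
          have h' : Real.sqrt (j:ℝ) ≤ Real.sqrt ((j:ℝ)^2) := Real.sqrt_le_sqrt (by nlinarith)
          rwa [Real.sqrt_sq hj0.le] at h'
        rw [hmj, habs]
        have hs0 : 0 ≤ Real.sqrt (j:ℝ) := Real.sqrt_nonneg _
        nlinarith
    have hu0 : 0 ≤ (i:ℝ) / ((j:ℝ) * w i j) := by positivity
    have hu : (i:ℝ) / ((j:ℝ) * w i j) ≤ 1 := by
      rw [div_le_one (by positivity)]; exact hu1
    have heq : (i:ℝ) ^ s * (j:ℝ) ^ (-s) * (w i j) ^ (-s) =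
        ((i:ℝ) / ((j:ℝ) * w i j)) ^ s := by
      rw [Real.div_rpow hi0.le (by positivity), Real.mul_rpow hj0.le hw.le,
        div_eq_mul_inv, mul_inv, Real.rpow_neg hj0.le, Real.rpow_neg hw.le]
      ring
    rw [heq]
    exact Real.rpow_le_one hu0 hu hs
  have hsplit : (i:ℝ) ^ (s+β') = (i:ℝ) ^ s * (i:ℝ) ^ β' := Real.rpow_add hi0 _ _
  have heq2 : bEnt s β β' i j =
      Kker β β' i j * ((i:ℝ) ^ s * (j:ℝ) ^ (-s) * (w i j) ^ (-s)) := by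
    unfold bEnt Kker
    rw [hsplit]; ring
  rw [heq2]
  calc Kker β β' i j * ((i:ℝ) ^ s * (j:ℝ) ^ (-s) * (w i j) ^ (-s)) ≤
      Kker β β' i j * 1 := mul_le_mul_of_nonneg_left hA (Kker_nonneg β β' i j)
    _ = Kker β β' i j := mul_one _

section Schur
variable {β β' : ℝ} (hβ'0 : 0 ≤ β') (hβ'β : β' < β) (hβ : β ≤ 1/2)

include hβ'0 hβ'β hβ

lemma row_bound (i : ℕ+) :
    Summable (fun j : ℕ+ => Kker β β' i j * (j:ℝ) ^ (-((β+β')/2))) ∧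
    (∑' j : ℕ+, Kker β β' i j * (j:ℝ) ^ (-((β+β')/2))) ≤
      (16/(β-β')) * (i:ℝ) ^ (-((β+β')/2)) := by
  have hε : 0 < (β-β')/2 := by linarith
  have hε4 : (β-β')/2 ≤ 1/4 := by linarith
  have hi1 : (1:ℝ) ≤ (i:ℝ) := pnat_one_le_real i
  have hi0 : (0:ℝ) < (i:ℝ) := by linarith
  have hS := S_bound (b := β) (c := (β+β')/2) (a' := (β+3*β')/2) (m' := (β-β')/2)
    (by linarith) (by linarith) (by linarith) (by linarith) (by linarith) (by linarith)
    hε (by linarith) (by linarith) (by linarith) i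
  have hfun : (fun j : ℕ+ => Kker β β' i j * (j:ℝ) ^ (-((β+β')/2))) =
      (fun j : ℕ+ => (i:ℝ) ^ β' *
        (((min i j : ℕ+):ℝ) ^ (-β) * ((j:ℝ)) ^ (-((β+β')/2)) * (1 + |(i:ℝ)-(j:ℝ)|)⁻¹)) := by
    funext j; unfold Kker; ring
  constructor
  · rw [hfun]; exact hS.1.mul_left _
  · rw [hfun, tsum_mul_left]
    have hcoef : 2/(β+(β+β')/2-(β+3*β')/2) + 2/(1-(β+3*β')/2) + 1/((β-β')/2) ≤
        8/((β-β')/2) := by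
      have e1 : β+(β+β')/2-(β+3*β')/2 = β - β' := by ring
      rw [e1]
      have h2 : 3*((β-β')/2) ≤ 1-(β+3*β')/2 := by linarith
      have l1 : 2/(β-β') = 1/((β-β')/2) := by
        have h := ne_of_gt (show (0:ℝ) < β-β' by linarith)
        field_simp
      have l2 : 2/(1-(β+3*β')/2) ≤ 2/(3*((β-β')/2)) :=
        div_le_div_of_nonneg_left (by norm_num) (by linarith) h2
      have l3 : 2/(3*((β-β')/2)) = (2/3)/((β-β')/2) := by
        rw [← div_div]
      have l5 : 1/((β-β')/2) + (2/3)/((β-β')/2) + 1/((β-β')/2) ≤ 8/((β-β')/2) := by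
        rw [← add_div, ← add_div]
        exact (div_le_div_iff_of_pos_right hε).mpr (by norm_num)
      rw [l1]
      linarith
    refine le_trans (mul_le_mul_of_nonneg_left hS.2 (Real.rpow_nonneg hi0.le β')) ?_
    have hexp : (i:ℝ) ^ β' * (i:ℝ) ^ (-((β+3*β')/2)) = (i:ℝ) ^ (-((β+β')/2)) := by
      rw [← Real.rpow_add hi0]; congr 1; ring
    have h16 : (16:ℝ)/(β-β') = 8/((β-β')/2) := by
      rw [div_eq_div_iff (by linarith) (by linarith)]; ring
    calc (i:ℝ) ^ β' * ((2/(β+(β+β')/2-(β+3*β')/2) + 2/(1-(β+3*β')/2) + 1/((β-β')/2)) *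
          (i:ℝ) ^ (-((β+3*β')/2)))
        = (2/(β+(β+β')/2-(β+3*β')/2) + 2/(1-(β+3*β')/2) + 1/((β-β')/2)) *
          ((i:ℝ) ^ β' * (i:ℝ) ^ (-((β+3*β')/2))) := by ring
      _ ≤ (8/((β-β')/2)) * ((i:ℝ) ^ β' * (i:ℝ) ^ (-((β+3*β')/2))) := by
          apply mul_le_mul_of_nonneg_right hcoef
          positivity
      _ = (16/(β-β')) * (i:ℝ) ^ (-((β+β')/2)) := by rw [hexp, h16]

lemma col_bound (j : ℕ+) :
    Summable (fun i : ℕ+ => Kker β β' i j * (i:ℝ) ^ (-((β+β')/2))) ∧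
    (∑' i : ℕ+, Kker β β' i j * (i:ℝ) ^ (-((β+β')/2))) ≤
      (16/(β-β')) * (j:ℝ) ^ (-((β+β')/2)) := by
  have hε : 0 < (β-β')/2 := by linarith
  have hε4 : (β-β')/2 ≤ 1/4 := by linarith
  have hj1 : (1:ℝ) ≤ (j:ℝ) := pnat_one_le_real j
  have hj0 : (0:ℝ) < (j:ℝ) := by linarith
  have hS := S_bound (b := β) (c := (β-β')/2) (a' := (β+β')/2) (m' := (β-β')/2)
    (by linarith) (by linarith) (by linarith) (by linarith) (by linarith) (by linarith)
    hε (by linarith) (by linarith) (by linarith) j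
  have hfun : (fun i : ℕ+ => Kker β β' i j * (i:ℝ) ^ (-((β+β')/2))) =
      (fun i : ℕ+ =>
        ((min j i : ℕ+):ℝ) ^ (-β) * ((i:ℝ)) ^ (-((β-β')/2)) * (1 + |(j:ℝ)-(i:ℝ)|)⁻¹) := by
    funext i
    unfold Kker
    have hi0 : (0:ℝ) < (i:ℝ) := by linarith [pnat_one_le_real i]
    have hmm : (min i j : ℕ+) = (min j i : ℕ+) := min_comm i j
    have habs : |(i:ℝ)-(j:ℝ)| = |(j:ℝ)-(i:ℝ)| := abs_sub_comm _ _
    have hexp : (i:ℝ) ^ β' * (i:ℝ) ^ (-((β+β')/2)) = (i:ℝ) ^ (-((β-β')/2)) := by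
      rw [← Real.rpow_add hi0]; congr 1; ring
    rw [hmm, habs, show (i:ℝ) ^ β' * ((min j i : ℕ+):ℝ) ^ (-β) * (1 + |(j:ℝ)-(i:ℝ)|)⁻¹ *
      (i:ℝ) ^ (-((β+β')/2)) = ((i:ℝ) ^ β' * (i:ℝ) ^ (-((β+β')/2))) *
      ((min j i : ℕ+):ℝ) ^ (-β) * (1 + |(j:ℝ)-(i:ℝ)|)⁻¹ by ring, hexp]
    ring
  constructor
  · rw [hfun]; exact hS.1
  · rw [hfun]
    refine le_trans hS.2 ?_
    have hcoef : 2/(β+(β-β')/2-(β+β')/2) + 2/(1-(β+β')/2) + 1/((β-β')/2) ≤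
        8/((β-β')/2) := by
      have e1 : β+(β-β')/2-(β+β')/2 = β - β' := by ring
      rw [e1]
      have l1 : 2/(β-β') = 1/((β-β')/2) := by
        have h := ne_of_gt (show (0:ℝ) < β-β' by linarith)
        field_simp
      have h2 : (1:ℝ)/2 ≤ 1-(β+β')/2 := by linarith
      have l2 : 2/(1-(β+β')/2) ≤ 2/(1/2 : ℝ) :=
        div_le_div_of_nonneg_left (by norm_num) (by linarith) h2
      have l2' : (2:ℝ)/(1/2 : ℝ) = 4 := by norm_num
      have l4 : (4:ℝ) ≤ 6/((β-β')/2) := by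
        rw [le_div_iff₀ hε]; linarith
      have l5 : 1/((β-β')/2) + 1/((β-β')/2) + 6/((β-β')/2) ≤ 8/((β-β')/2) := by
        rw [← add_div, ← add_div]
        exact (div_le_div_iff_of_pos_right hε).mpr (by norm_num)
      rw [l1]
      linarith
    have h16 : (16:ℝ)/(β-β') = 8/((β-β')/2) := by
      rw [div_eq_div_iff (by linarith) (by linarith)]; ring
    rw [h16]
    exact mul_le_mul_of_nonneg_right hcoef (Real.rpow_nonneg hj0.le _)

lemma K_le_BD (i j : ℕ+) :
    Kker β β' i j ≤ (i:ℝ) ^ (β'+(β+β')/2) * (j:ℝ) ^ (-((β+β')/2)) := by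
  have hi1 : (1:ℝ) ≤ (i:ℝ) := pnat_one_le_real i
  have hj1 : (1:ℝ) ≤ (j:ℝ) := pnat_one_le_real j
  have hi0 : (0:ℝ) < (i:ℝ) := by linarith
  have hj0 : (0:ℝ) < (j:ℝ) := by linarith
  have hγ0 : 0 ≤ (β+β')/2 := by linarith
  have hγβ : (β+β')/2 ≤ β := by linarith
  unfold Kker
  rcases le_total j i with h | h
  · -- min = j
    have hmin : ((min i j : ℕ+):ℝ) = (j:ℝ) := by
      rw [pnat_min_cast, min_eq_right (by exact_mod_cast h : (j:ℝ) ≤ (i:ℝ))]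
    rw [hmin]
    have f1 : (j:ℝ) ^ (-β) ≤ (j:ℝ) ^ (-((β+β')/2)) :=
      Real.rpow_le_rpow_of_exponent_le hj1 (by linarith)
    have f2 : (1 + |(i:ℝ)-(j:ℝ)|)⁻¹ ≤ 1 := by
      rw [inv_le_one_iff₀]; right; have := abs_nonneg ((i:ℝ)-(j:ℝ)); linarith
    have f3 : (i:ℝ) ^ β' ≤ (i:ℝ) ^ (β'+(β+β')/2) :=
      Real.rpow_le_rpow_of_exponent_le hi1 (by linarith)
    calc (i:ℝ) ^ β' * (j:ℝ) ^ (-β) * (1 + |(i:ℝ)-(j:ℝ)|)⁻¹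
        ≤ (i:ℝ) ^ β' * (j:ℝ) ^ (-((β+β')/2)) * 1 := by
          apply mul_le_mul (mul_le_mul_of_nonneg_left f1 (Real.rpow_nonneg hi0.le _)) f2
            (by positivity) (by positivity)
      _ = (i:ℝ) ^ β' * (j:ℝ) ^ (-((β+β')/2)) := by ring
      _ ≤ (i:ℝ) ^ (β'+(β+β')/2) * (j:ℝ) ^ (-((β+β')/2)) :=
          mul_le_mul_of_nonneg_right f3 (Real.rpow_nonneg hj0.le _)
  · -- min = i, j ≥ i
    have hmin : ((min i j : ℕ+):ℝ) = (i:ℝ) := by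
      rw [pnat_min_cast, min_eq_left (by exact_mod_cast h : (i:ℝ) ≤ (j:ℝ))]
    rw [hmin]
    have hij : (i:ℝ) ≤ (j:ℝ) := by exact_mod_cast h
    have habs : |(i:ℝ)-(j:ℝ)| = (j:ℝ)-(i:ℝ) := by
      rw [abs_sub_comm, abs_of_nonneg (by linarith)]
    set D : ℝ := (j:ℝ)-(i:ℝ) with hD
    have hD0 : 0 ≤ D := by rw [hD]; linarith
    have hkey : (j:ℝ) ≤ (i:ℝ) * (1 + D) := by nlinarith
    have hjg : (j:ℝ) ^ ((β+β')/2) ≤ ((i:ℝ) * (1+D)) ^ ((β+β')/2) :=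
      Real.rpow_le_rpow hj0.le hkey hγ0
    have hexpand : ((i:ℝ) * (1+D)) ^ ((β+β')/2) =
        (i:ℝ) ^ ((β+β')/2) * (1+D) ^ ((β+β')/2) :=
      Real.mul_rpow hi0.le (by linarith)
    -- goal: i^β' * i^(-β) * (1+D)⁻¹ ≤ i^(β'+γ) * j^(-γ)
    rw [habs]
    have hjne : (j:ℝ) ^ ((β+β')/2) > 0 := Real.rpow_pos_of_pos hj0 _
    rw [show (-((β+β')/2)) = -((β+β')/2) from rfl]
    have hgoal2 : (i:ℝ) ^ β' * (i:ℝ) ^ (-β) * (1+D)⁻¹ * (j:ℝ) ^ ((β+β')/2) ≤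
        (i:ℝ) ^ (β'+(β+β')/2) := by
      have step1 : (i:ℝ) ^ β' * (i:ℝ) ^ (-β) * (1+D)⁻¹ * (j:ℝ) ^ ((β+β')/2) ≤
          (i:ℝ) ^ β' * (i:ℝ) ^ (-β) * (1+D)⁻¹ *
            ((i:ℝ) ^ ((β+β')/2) * (1+D) ^ ((β+β')/2)) := by
        apply mul_le_mul_of_nonneg_left (hjg.trans_eq hexpand)
        positivity
      have hd1 : (0:ℝ) < 1 + D := by linarith
      have step2 : (1+D)⁻¹ * (1+D) ^ ((β+β')/2) = (1+D) ^ ((β+β')/2 - 1) := by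
        rw [← Real.rpow_neg_one (1+D), ← Real.rpow_add hd1]; congr 1; ring
      have step3 : (1+D) ^ ((β+β')/2 - 1) ≤ 1 := by
        apply Real.rpow_le_one_of_one_le_of_nonpos (by linarith) (by linarith)
      have step4 : (i:ℝ) ^ (-β) ≤ 1 := by
        rw [← Real.rpow_zero (i:ℝ)]
        exact Real.rpow_le_rpow_of_exponent_le hi1 (by linarith)
      have step5 : (i:ℝ) ^ β' * (i:ℝ) ^ ((β+β')/2) = (i:ℝ) ^ (β'+(β+β')/2) :=
        (Real.rpow_add hi0 _ _).symm
      calc (i:ℝ) ^ β' * (i:ℝ) ^ (-β) * (1+D)⁻¹ * (j:ℝ) ^ ((β+β')/2)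
          ≤ (i:ℝ) ^ β' * (i:ℝ) ^ (-β) * (1+D)⁻¹ *
            ((i:ℝ) ^ ((β+β')/2) * (1+D) ^ ((β+β')/2)) := step1
        _ = ((i:ℝ) ^ β' * (i:ℝ) ^ ((β+β')/2)) * (i:ℝ) ^ (-β) *
            ((1+D)⁻¹ * (1+D) ^ ((β+β')/2)) := by ring
        _ = (i:ℝ) ^ (β'+(β+β')/2) * (i:ℝ) ^ (-β) * (1+D) ^ ((β+β')/2 - 1) := by
            rw [step2, step5]
        _ ≤ (i:ℝ) ^ (β'+(β+β')/2) * 1 * 1 := by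
            apply mul_le_mul (mul_le_mul_of_nonneg_left step4 (by positivity)) step3
              (by positivity) (by positivity)
        _ = (i:ℝ) ^ (β'+(β+β')/2) := by ring
    -- divide by j^γ
    have := mul_le_mul_of_nonneg_right hgoal2 (le_of_lt (inv_pos.2 hjne))
    have hcancel : (j:ℝ) ^ ((β+β')/2) * ((j:ℝ) ^ ((β+β')/2))⁻¹ = 1 :=
      mul_inv_cancel₀ (ne_of_gt hjne)
    have hval : ((j:ℝ) ^ ((β+β')/2))⁻¹ = (j:ℝ) ^ (-((β+β')/2)) :=
      (Real.rpow_neg hj0.le _).symm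
    calc (i:ℝ) ^ β' * (i:ℝ) ^ (-β) * (1+D)⁻¹
        = (i:ℝ) ^ β' * (i:ℝ) ^ (-β) * (1+D)⁻¹ *
          ((j:ℝ) ^ ((β+β')/2) * ((j:ℝ) ^ ((β+β')/2))⁻¹) := by rw [hcancel]; ring
      _ = ((i:ℝ) ^ β' * (i:ℝ) ^ (-β) * (1+D)⁻¹ * (j:ℝ) ^ ((β+β')/2)) *
          ((j:ℝ) ^ ((β+β')/2))⁻¹ := by ring
      _ ≤ (i:ℝ) ^ (β'+(β+β')/2) * ((j:ℝ) ^ ((β+β')/2))⁻¹ :=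
          mul_le_mul_of_nonneg_right hgoal2 (by positivity)
      _ = (i:ℝ) ^ (β'+(β+β')/2) * (j:ℝ) ^ (-((β+β')/2)) := by rw [hval]

end Schur
/-- Let `s ≥ 0` and `0 ≤ β' < β ≤ 1/2`.  The matrix with entries
`b_i^j = i^{s+β'} j^{−s} (i∧j)^{−β} (1+|i−j|)^{−1} w(i,j)^{−s}` defines a bounded operator
on `ℓ²(ℕ⁺)` with operator norm at most `2^{s+4}/(β−β')`: for every square-summable complex
sequence `z`, the image sequence `(Bz)_i = ∑_j b_i^j z_j` is well defined, square-summable,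
and `‖Bz‖_{ℓ²} ≤ (2^{s+4}/(β−β'))·‖z‖_{ℓ²}`. -/
theorem bEnt_l2_opNorm_bound (s β β' : ℝ) (hs : 0 ≤ s) (hβ'0 : 0 ≤ β') (hβ'β : β' < β)
    (hβ : β ≤ 1 / 2) :
    ∀ z : ℕ+ → ℂ, Summable (fun j : ℕ+ => ‖z j‖ ^ 2) →
      (∀ i : ℕ+, Summable fun j : ℕ+ => (bEnt s β β' i j : ℂ) * z j) ∧
      Summable (fun i : ℕ+ => ‖∑' j : ℕ+, (bEnt s β β' i j : ℂ) * z j‖ ^ 2) ∧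
      Real.sqrt (∑' i : ℕ+, ‖∑' j : ℕ+, (bEnt s β β' i j : ℂ) * z j‖ ^ 2) ≤
        2 ^ (s + 4) / (β - β') * Real.sqrt (∑' j : ℕ+, ‖z j‖ ^ 2) := by
  intro z hz
  have hβ2 : (0:ℝ) < β - β' := by linarith
  -- abbreviations (as plain functions, all fully applied)
  have hppos : ∀ n : ℕ+, (0:ℝ) < (n:ℝ) ^ (-((β+β')/2)) :=
    fun n => Real.rpow_pos_of_pos (by linarith [pnat_one_le_real n]) _
  have hqnn : ∀ j : ℕ+, 0 ≤ ‖z j‖^2 / (j:ℝ) ^ (-((β+β')/2)) :=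
    fun j => div_nonneg (by positivity) (hppos j).le
  have hKnn : ∀ i j : ℕ+, 0 ≤ Kker β β' i j := fun i j => Kker_nonneg β β' i j
  -- R4 : weighted square sums summable
  have hKq_le : ∀ i j : ℕ+, Kker β β' i j * (‖z j‖^2 / (j:ℝ) ^ (-((β+β')/2))) ≤
      (i:ℝ) ^ (β'+(β+β')/2) * ‖z j‖^2 := by
    intro i j
    have h1 := K_le_BD hβ'0 hβ'β hβ i j
    have h2 := hqnn j
    have h3 : ((j:ℝ) ^ (-((β+β')/2))) * (‖z j‖^2 / (j:ℝ) ^ (-((β+β')/2))) = ‖z j‖^2 := by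
      field_simp
    calc Kker β β' i j * (‖z j‖^2 / (j:ℝ) ^ (-((β+β')/2)))
        ≤ ((i:ℝ) ^ (β'+(β+β')/2) * (j:ℝ) ^ (-((β+β')/2))) *
          (‖z j‖^2 / (j:ℝ) ^ (-((β+β')/2))) := mul_le_mul_of_nonneg_right h1 h2
      _ = (i:ℝ) ^ (β'+(β+β')/2) *
          (((j:ℝ) ^ (-((β+β')/2))) * (‖z j‖^2 / (j:ℝ) ^ (-((β+β')/2)))) := by ring
      _ = (i:ℝ) ^ (β'+(β+β')/2) * ‖z j‖^2 := by rw [h3]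
  have R4 : ∀ i : ℕ+, Summable (fun j : ℕ+ =>
      Kker β β' i j * (‖z j‖^2 / (j:ℝ) ^ (-((β+β')/2)))) := by
    intro i
    apply Summable.of_nonneg_of_le (fun j => mul_nonneg (hKnn i j) (hqnn j)) (hKq_le i)
    exact hz.mul_left _
  -- R5 : Summable K u
  have R5 : ∀ i : ℕ+, Summable (fun j : ℕ+ => Kker β β' i j * ‖z j‖) := by
    intro i
    have hle : ∀ j : ℕ+, Kker β β' i j * ‖z j‖ ≤
        (Kker β β' i j * (j:ℝ) ^ (-((β+β')/2)) +
         Kker β β' i j * (‖z j‖^2 / (j:ℝ) ^ (-((β+β')/2)))) / 2 := by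
      intro j
      have hp := hppos j
      have key : ‖z j‖ ≤ ((j:ℝ) ^ (-((β+β')/2)) + ‖z j‖^2 / (j:ℝ) ^ (-((β+β')/2))) / 2 := by
        rw [le_div_iff₀ (by norm_num : (0:ℝ) < 2), ← sub_nonneg]
        have e : ‖z j‖^2 / (j:ℝ) ^ (-((β+β')/2)) * ((j:ℝ) ^ (-((β+β')/2))) = ‖z j‖^2 :=
          div_mul_cancel₀ _ (ne_of_gt hp)
        nlinarith [sq_nonneg (‖z j‖ - (j:ℝ) ^ (-((β+β')/2))), hp, e]
      calc Kker β β' i j * ‖z j‖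
          ≤ Kker β β' i j *
            (((j:ℝ) ^ (-((β+β')/2)) + ‖z j‖^2 / (j:ℝ) ^ (-((β+β')/2))) / 2) :=
            mul_le_mul_of_nonneg_left key (hKnn i j)
        _ = (Kker β β' i j * (j:ℝ) ^ (-((β+β')/2)) +
            Kker β β' i j * (‖z j‖^2 / (j:ℝ) ^ (-((β+β')/2)))) / 2 := by ring
    apply Summable.of_nonneg_of_le
      (fun j => mul_nonneg (hKnn i j) (norm_nonneg _)) hle
    exact (((row_bound hβ'0 hβ'β hβ i).1.add (R4 i)).div_const 2)
  -- bEnt * u summable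
  have hknn : ∀ i j : ℕ+, 0 ≤ bEnt s β β' i j := fun i j => bEnt_nonneg s β β' i j
  have hkKu : ∀ i j : ℕ+, bEnt s β β' i j * ‖z j‖ ≤ Kker β β' i j * ‖z j‖ :=
    fun i j => mul_le_mul_of_nonneg_right (bEnt_le_K hs β β' i j) (norm_nonneg _)
  have Rk : ∀ i : ℕ+, Summable (fun j : ℕ+ => bEnt s β β' i j * ‖z j‖) := by
    intro i
    exact Summable.of_nonneg_of_le (fun j => mul_nonneg (hknn i j) (norm_nonneg _))
      (hkKu i) (R5 i)
  -- norm identity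
  have hnorm : ∀ i j : ℕ+, ‖(bEnt s β β' i j : ℂ) * z j‖ = bEnt s β β' i j * ‖z j‖ := by
    intro i j
    rw [norm_mul, Complex.norm_real, Real.norm_eq_abs, abs_of_nonneg (hknn i j)]
  have stmt1 : ∀ i : ℕ+, Summable fun j : ℕ+ => (bEnt s β β' i j : ℂ) * z j := by
    intro i
    apply Summable.of_norm
    have : (fun j : ℕ+ => ‖(bEnt s β β' i j : ℂ) * z j‖) =
        (fun j : ℕ+ => bEnt s β β' i j * ‖z j‖) := funext (hnorm i)
    rw [this]; exact Rk i
  refine ⟨stmt1, ?_⟩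
  -- Cauchy–Schwarz per row
  have CS : ∀ i : ℕ+, (∑' j : ℕ+, Kker β β' i j * ‖z j‖)^2 ≤
      (∑' j : ℕ+, Kker β β' i j * (j:ℝ) ^ (-((β+β')/2))) *
      (∑' j : ℕ+, Kker β β' i j * (‖z j‖^2 / (j:ℝ) ^ (-((β+β')/2)))) := by
    intro i
    have hSFnn : 0 ≤ ∑' j : ℕ+, Kker β β' i j * (j:ℝ) ^ (-((β+β')/2)) :=
      tsum_nonneg (fun j => mul_nonneg (hKnn i j) (hppos j).le)
    have hSGnn : 0 ≤ ∑' j : ℕ+, Kker β β' i j * (‖z j‖^2 / (j:ℝ) ^ (-((β+β')/2))) :=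
      tsum_nonneg (fun j => mul_nonneg (hKnn i j) (hqnn j))
    have hfs : ∀ t : Finset ℕ+, (∑ j ∈ t, Kker β β' i j * ‖z j‖) ≤
        Real.sqrt ((∑' j : ℕ+, Kker β β' i j * (j:ℝ) ^ (-((β+β')/2))) *
          (∑' j : ℕ+, Kker β β' i j * (‖z j‖^2 / (j:ℝ) ^ (-((β+β')/2))))) := by
      intro t
      have hsq : ∀ j ∈ t, (Kker β β' i j * ‖z j‖)^2 =
          (Kker β β' i j * (j:ℝ) ^ (-((β+β')/2))) *
          (Kker β β' i j * (‖z j‖^2 / (j:ℝ) ^ (-((β+β')/2)))) := by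
        intro j _
        have e : (‖z j‖^2 / (j:ℝ) ^ (-((β+β')/2))) * ((j:ℝ) ^ (-((β+β')/2))) = ‖z j‖^2 :=
          div_mul_cancel₀ _ (ne_of_gt (hppos j))
        calc (Kker β β' i j * ‖z j‖)^2 = Kker β β' i j ^2 * ‖z j‖^2 := by ring
          _ = Kker β β' i j ^2 * ((‖z j‖^2 / (j:ℝ) ^ (-((β+β')/2))) *
              ((j:ℝ) ^ (-((β+β')/2)))) := by rw [e]
          _ = (Kker β β' i j * (j:ℝ) ^ (-((β+β')/2))) *
              (Kker β β' i j * (‖z j‖^2 / (j:ℝ) ^ (-((β+β')/2)))) := by ring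
      have hcs := Finset.sum_sq_le_sum_mul_sum_of_sq_eq_mul t
        (f := fun j => Kker β β' i j * (j:ℝ) ^ (-((β+β')/2)))
        (g := fun j => Kker β β' i j * (‖z j‖^2 / (j:ℝ) ^ (-((β+β')/2))))
        (r := fun j => Kker β β' i j * ‖z j‖)
        (fun j _ => mul_nonneg (hKnn i j) (hppos j).le)
        (fun j _ => mul_nonneg (hKnn i j) (hqnn j)) hsq
      have hb1 : (∑ j ∈ t, Kker β β' i j * (j:ℝ) ^ (-((β+β')/2))) ≤
          ∑' j : ℕ+, Kker β β' i j * (j:ℝ) ^ (-((β+β')/2)) :=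
        Summable.sum_le_tsum t (fun j _ => mul_nonneg (hKnn i j) (hppos j).le)
          (row_bound hβ'0 hβ'β hβ i).1
      have hb2 : (∑ j ∈ t, Kker β β' i j * (‖z j‖^2 / (j:ℝ) ^ (-((β+β')/2)))) ≤
          ∑' j : ℕ+, Kker β β' i j * (‖z j‖^2 / (j:ℝ) ^ (-((β+β')/2))) :=
        Summable.sum_le_tsum t (fun j _ => mul_nonneg (hKnn i j) (hqnn j)) (R4 i)
      have hcs2 : (∑ j ∈ t, Kker β β' i j * ‖z j‖)^2 ≤
          (∑' j : ℕ+, Kker β β' i j * (j:ℝ) ^ (-((β+β')/2))) *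
          (∑' j : ℕ+, Kker β β' i j * (‖z j‖^2 / (j:ℝ) ^ (-((β+β')/2)))) := by
        refine le_trans hcs ?_
        apply mul_le_mul hb1 hb2 (Finset.sum_nonneg
          (fun j _ => mul_nonneg (hKnn i j) (hqnn j))) hSFnn
      have hsnn : 0 ≤ ∑ j ∈ t, Kker β β' i j * ‖z j‖ :=
        Finset.sum_nonneg (fun j _ => mul_nonneg (hKnn i j) (norm_nonneg _))
      have := Real.sqrt_le_sqrt hcs2
      rwa [Real.sqrt_sq hsnn] at this
    have htle : (∑' j : ℕ+, Kker β β' i j * ‖z j‖) ≤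
        Real.sqrt ((∑' j : ℕ+, Kker β β' i j * (j:ℝ) ^ (-((β+β')/2))) *
          (∑' j : ℕ+, Kker β β' i j * (‖z j‖^2 / (j:ℝ) ^ (-((β+β')/2))))) :=
      Summable.tsum_le_of_sum_le (R5 i) hfs
    have htnn : 0 ≤ ∑' j : ℕ+, Kker β β' i j * ‖z j‖ :=
      tsum_nonneg (fun j => mul_nonneg (hKnn i j) (norm_nonneg _))
    calc (∑' j : ℕ+, Kker β β' i j * ‖z j‖)^2 ≤
        Real.sqrt ((∑' j : ℕ+, Kker β β' i j * (j:ℝ) ^ (-((β+β')/2))) *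
          (∑' j : ℕ+, Kker β β' i j * (‖z j‖^2 / (j:ℝ) ^ (-((β+β')/2)))))^2 :=
          pow_le_pow_left₀ htnn htle 2
      _ = _ := Real.sq_sqrt (mul_nonneg (tsum_nonneg
            (fun j => mul_nonneg (hKnn i j) (hppos j).le))
            (tsum_nonneg (fun j => mul_nonneg (hKnn i j) (hqnn j))))
  -- Fubini setup
  set F2 : ℕ+ × ℕ+ → ℝ := fun pr =>
    ((pr.2:ℝ) ^ (-((β+β')/2))) * Kker β β' pr.2 pr.1 *
      (‖z pr.1‖^2 / ((pr.1:ℝ) ^ (-((β+β')/2)))) with hF2def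
  have hF2nn : 0 ≤ F2 := by
    intro pr
    exact mul_nonneg (mul_nonneg (hppos pr.2).le (hKnn pr.2 pr.1)) (hqnn pr.1)
  have comp1 : ∀ j : ℕ+, Summable (fun i : ℕ+ => F2 (j, i)) := by
    intro j
    have : (fun i : ℕ+ => F2 (j, i)) = (fun i : ℕ+ =>
        (‖z j‖^2 / ((j:ℝ) ^ (-((β+β')/2)))) *
        (Kker β β' i j * (i:ℝ) ^ (-((β+β')/2)))) := by
      funext i; rw [hF2def]; ring
    rw [this]
    exact (col_bound hβ'0 hβ'β hβ j).1.mul_left _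
  have htscol : ∀ j : ℕ+, ∑' i : ℕ+, F2 (j, i) =
      (‖z j‖^2 / ((j:ℝ) ^ (-((β+β')/2)))) *
      (∑' i : ℕ+, Kker β β' i j * (i:ℝ) ^ (-((β+β')/2))) := by
    intro j
    have : (fun i : ℕ+ => F2 (j, i)) = (fun i : ℕ+ =>
        (‖z j‖^2 / ((j:ℝ) ^ (-((β+β')/2)))) *
        (Kker β β' i j * (i:ℝ) ^ (-((β+β')/2)))) := by
      funext i; rw [hF2def]; ring
    rw [this, tsum_mul_left]
  have hcolle : ∀ j : ℕ+, ∑' i : ℕ+, F2 (j, i) ≤ (16/(β-β')) * ‖z j‖^2 := by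
    intro j
    rw [htscol j]
    have h1 := (col_bound hβ'0 hβ'β hβ j).2
    have e : (‖z j‖^2 / ((j:ℝ) ^ (-((β+β')/2)))) *
        ((16/(β-β')) * (j:ℝ) ^ (-((β+β')/2))) = (16/(β-β')) * ‖z j‖^2 := by
      rw [show (‖z j‖^2 / ((j:ℝ) ^ (-((β+β')/2)))) *
        ((16/(β-β')) * (j:ℝ) ^ (-((β+β')/2))) = (16/(β-β')) *
        ((‖z j‖^2 / ((j:ℝ) ^ (-((β+β')/2)))) * ((j:ℝ) ^ (-((β+β')/2)))) by ring,
        div_mul_cancel₀ _ (ne_of_gt (hppos j))]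
    calc (‖z j‖^2 / ((j:ℝ) ^ (-((β+β')/2)))) *
        (∑' i : ℕ+, Kker β β' i j * (i:ℝ) ^ (-((β+β')/2)))
        ≤ (‖z j‖^2 / ((j:ℝ) ^ (-((β+β')/2)))) *
          ((16/(β-β')) * (j:ℝ) ^ (-((β+β')/2))) :=
          mul_le_mul_of_nonneg_left h1 (hqnn j)
      _ = (16/(β-β')) * ‖z j‖^2 := e
  have comp2 : Summable (fun j : ℕ+ => ∑' i : ℕ+, F2 (j, i)) := by
    apply Summable.of_nonneg_of_le
      (fun j => tsum_nonneg (fun i => hF2nn (j, i))) hcolle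
    exact hz.mul_left _
  have hF2sum : Summable F2 := (summable_prod_of_nonneg hF2nn).2 ⟨comp1, comp2⟩
  have hF2swap : Summable (fun pr : ℕ+ × ℕ+ => F2 pr.swap) := hF2sum.prod_symm
  have hswnn : 0 ≤ (fun pr : ℕ+ × ℕ+ => F2 pr.swap) := fun pr => hF2nn pr.swap
  have compS1 : ∀ i : ℕ+, Summable (fun j : ℕ+ => F2 (j, i)) :=
    fun i => ((summable_prod_of_nonneg hswnn).1 hF2swap).1 i
  have hVsum : Summable (fun i : ℕ+ => ∑' j : ℕ+, F2 (j, i)) :=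
    ((summable_prod_of_nonneg hswnn).1 hF2swap).2
  have hcomm : ∑' (i : ℕ+) (j : ℕ+), F2 (j, i) = ∑' (j : ℕ+) (i : ℕ+), F2 (j, i) :=
    Summable.tsum_comm' hF2sum comp1 compS1
  have hVle : ∑' (i : ℕ+) (j : ℕ+), F2 (j, i) ≤ (16/(β-β')) * ∑' j : ℕ+, ‖z j‖^2 := by
    rw [hcomm]
    calc ∑' (j : ℕ+) (i : ℕ+), F2 (j, i)
        ≤ ∑' j : ℕ+, (16/(β-β')) * ‖z j‖^2 :=
          Summable.tsum_le_tsum hcolle comp2 (hz.mul_left _)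
      _ = (16/(β-β')) * ∑' j : ℕ+, ‖z j‖^2 := tsum_mul_left
  have htsrow : ∀ i : ℕ+, ∑' j : ℕ+, F2 (j, i) =
      ((i:ℝ) ^ (-((β+β')/2))) *
      (∑' j : ℕ+, Kker β β' i j * (‖z j‖^2 / (j:ℝ) ^ (-((β+β')/2)))) := by
    intro i
    have : (fun j : ℕ+ => F2 (j, i)) = (fun j : ℕ+ =>
        ((i:ℝ) ^ (-((β+β')/2))) *
        (Kker β β' i j * (‖z j‖^2 / (j:ℝ) ^ (-((β+β')/2))))) := by
      funext j; rw [hF2def]; ring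
    rw [this, tsum_mul_left]
  -- main per-row bound
  have hY2_le : ∀ i : ℕ+, (∑' j : ℕ+, Kker β β' i j * ‖z j‖)^2 ≤
      (16/(β-β')) * ∑' j : ℕ+, F2 (j, i) := by
    intro i
    have hSGnn : 0 ≤ ∑' j : ℕ+, Kker β β' i j * (‖z j‖^2 / (j:ℝ) ^ (-((β+β')/2))) :=
      tsum_nonneg (fun j => mul_nonneg (hKnn i j) (hqnn j))
    calc (∑' j : ℕ+, Kker β β' i j * ‖z j‖)^2
        ≤ (∑' j : ℕ+, Kker β β' i j * (j:ℝ) ^ (-((β+β')/2))) *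
          (∑' j : ℕ+, Kker β β' i j * (‖z j‖^2 / (j:ℝ) ^ (-((β+β')/2)))) := CS i
      _ ≤ ((16/(β-β')) * (i:ℝ) ^ (-((β+β')/2))) *
          (∑' j : ℕ+, Kker β β' i j * (‖z j‖^2 / (j:ℝ) ^ (-((β+β')/2)))) :=
          mul_le_mul_of_nonneg_right (row_bound hβ'0 hβ'β hβ i).2 hSGnn
      _ = (16/(β-β')) * ∑' j : ℕ+, F2 (j, i) := by rw [htsrow i]; ring
  have hY2sum : Summable (fun i : ℕ+ => (∑' j : ℕ+, Kker β β' i j * ‖z j‖)^2) := by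
    apply Summable.of_nonneg_of_le (fun i => sq_nonneg _) hY2_le
    exact hVsum.mul_left _
  have hY2tsum : ∑' i : ℕ+, (∑' j : ℕ+, Kker β β' i j * ‖z j‖)^2 ≤
      (16/(β-β')) * ((16/(β-β')) * ∑' j : ℕ+, ‖z j‖^2) := by
    calc ∑' i : ℕ+, (∑' j : ℕ+, Kker β β' i j * ‖z j‖)^2
        ≤ ∑' i : ℕ+, (16/(β-β')) * ∑' j : ℕ+, F2 (j, i) :=
          Summable.tsum_le_tsum hY2_le hY2sum (hVsum.mul_left _)
      _ = (16/(β-β')) * ∑' (i : ℕ+) (j : ℕ+), F2 (j, i) := tsum_mul_left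
      _ ≤ (16/(β-β')) * ((16/(β-β')) * ∑' j : ℕ+, ‖z j‖^2) := by
          apply mul_le_mul_of_nonneg_left hVle (by positivity)
  -- link to complex sums
  have hTle : ∀ i : ℕ+, ‖∑' j : ℕ+, (bEnt s β β' i j : ℂ) * z j‖ ≤
      ∑' j : ℕ+, Kker β β' i j * ‖z j‖ := by
    intro i
    have hnorms : Summable (fun j : ℕ+ => ‖(bEnt s β β' i j : ℂ) * z j‖) := by
      have : (fun j : ℕ+ => ‖(bEnt s β β' i j : ℂ) * z j‖) =
          (fun j : ℕ+ => bEnt s β β' i j * ‖z j‖) := funext (hnorm i)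
      rw [this]; exact Rk i
    calc ‖∑' j : ℕ+, (bEnt s β β' i j : ℂ) * z j‖
        ≤ ∑' j : ℕ+, ‖(bEnt s β β' i j : ℂ) * z j‖ := norm_tsum_le_tsum_norm hnorms
      _ = ∑' j : ℕ+, bEnt s β β' i j * ‖z j‖ := by
          apply tsum_congr; intro j; exact hnorm i j
      _ ≤ ∑' j : ℕ+, Kker β β' i j * ‖z j‖ :=
          Summable.tsum_le_tsum (fun j => hkKu i j) (Rk i) (R5 i)
  have hT2le : ∀ i : ℕ+, ‖∑' j : ℕ+, (bEnt s β β' i j : ℂ) * z j‖^2 ≤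
      (∑' j : ℕ+, Kker β β' i j * ‖z j‖)^2 :=
    fun i => pow_le_pow_left₀ (norm_nonneg _) (hTle i) 2
  have stmt2 : Summable (fun i : ℕ+ => ‖∑' j : ℕ+, (bEnt s β β' i j : ℂ) * z j‖^2) :=
    Summable.of_nonneg_of_le (fun i => by positivity) hT2le hY2sum
  refine ⟨stmt2, ?_⟩
  have hfinal : ∑' i : ℕ+, ‖∑' j : ℕ+, (bEnt s β β' i j : ℂ) * z j‖^2 ≤
      (16/(β-β'))^2 * ∑' j : ℕ+, ‖z j‖^2 := by
    calc ∑' i : ℕ+, ‖∑' j : ℕ+, (bEnt s β β' i j : ℂ) * z j‖^2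
        ≤ ∑' i : ℕ+, (∑' j : ℕ+, Kker β β' i j * ‖z j‖)^2 :=
          Summable.tsum_le_tsum hT2le stmt2 hY2sum
      _ ≤ (16/(β-β')) * ((16/(β-β')) * ∑' j : ℕ+, ‖z j‖^2) := hY2tsum
      _ = (16/(β-β'))^2 * ∑' j : ℕ+, ‖z j‖^2 := by ring
  have hsq := Real.sqrt_le_sqrt hfinal
  have hzs : 0 ≤ ∑' j : ℕ+, ‖z j‖^2 := tsum_nonneg (fun j => by positivity)
  have hsplit : Real.sqrt ((16/(β-β'))^2 * ∑' j : ℕ+, ‖z j‖^2) =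
      (16/(β-β')) * Real.sqrt (∑' j : ℕ+, ‖z j‖^2) := by
    rw [Real.sqrt_mul (sq_nonneg _), Real.sqrt_sq (by positivity)]
  have h16 : (16:ℝ)/(β-β') ≤ 2 ^ (s+4) / (β-β') := by
    apply (div_le_div_iff_of_pos_right hβ2).mpr
    have h24 : (2:ℝ) ^ ((4:ℝ)) ≤ 2 ^ (s+4) :=
      Real.rpow_le_rpow_of_exponent_le one_le_two (by linarith)
    have he : (2:ℝ) ^ ((4:ℝ)) = 16 := by
      rw [show ((4:ℝ)) = ((4:ℕ):ℝ) by norm_num, Real.rpow_natCast]; norm_num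
    linarith
  calc Real.sqrt (∑' i : ℕ+, ‖∑' j : ℕ+, (bEnt s β β' i j : ℂ) * z j‖^2)
      ≤ Real.sqrt ((16/(β-β'))^2 * ∑' j : ℕ+, ‖z j‖^2) := hsq
    _ = (16/(β-β')) * Real.sqrt (∑' j : ℕ+, ‖z j‖^2) := hsplit
    _ ≤ 2 ^ (s+4) / (β-β') * Real.sqrt (∑' j : ℕ+, ‖z j‖^2) :=
        mul_le_mul_of_nonneg_right h16 (Real.sqrt_nonneg _)
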